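/- Let s, t, a, b be integers with 2 ≤ a ≤ s and 2 ≤ b ≤ t. Then for every real ε with 0 < ε < 1 there exists a natural number n₀ such that for all n ≥ n₀, r(K_{n,n}, K_{s,t}, st - ab + 2) ≥ (1 - ε) · (n/(max{a,b} - 1))^{1/min{a,b}}. -/

import Mathlib

open Finset

/-- `rBip n s t q` is the bipartite Erdős–Gyárfás function `r(K_{n,n}, K_{s,t}, q)`:
the minimum number of colors in an edge-coloring of `K_{n,n}` such that every copy of
`K_{s,t}` (with its part of size `s` in either side of the bipartition) receives at
least `q` distinct colors on its edges. -/
noncomputable def rBip (n s t q : ℕ) : ℕ :=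
  sInf {k : ℕ | ∃ c : Fin n → Fin n → ℕ,
    (∀ a b, c a b < k) ∧
    ∀ A B : Finset (Fin n),
      (A.card = s ∧ B.card = t) ∨ (A.card = t ∧ B.card = s) →
      q ≤ ((A ×ˢ B).image fun p => c p.1 p.2).card}

lemma aux_pow_le_descFactorial (d m : ℕ) : (d - (m - 1)) ^ m ≤ d.descFactorial m := by
  rw [Nat.descFactorial_eq_prod_range]
  calc (d - (m-1)) ^ m = ∏ _i ∈ range m, (d - (m-1)) := by
        rw [Finset.prod_const, card_range]
    _ ≤ ∏ i ∈ range m, (d - i) := by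
        apply Finset.prod_le_prod (fun _ _ => Nat.zero_le _)
        intro i hi
        have : i ≤ m - 1 := by have := mem_range.1 hi; omega
        omega

lemma aux2 (d m : ℕ) : (d - (m - 1)) ^ m ≤ m.factorial * d.choose m := by
  rw [← Nat.descFactorial_eq_factorial_mul_choose]
  exact aux_pow_le_descFactorial d m

lemma aux_sum_choose {n m M : ℕ} (N : Fin n → Finset (Fin n))
    (h : ∀ S : Finset (Fin n), S.card = m →
      ((univ : Finset (Fin n)).filter (fun v => S ⊆ N v)).card ≤ M) :
    ∑ v, ((N v).card.choose m) ≤ M * n.choose m := by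
  have key : ∀ v, (N v).card.choose m
      = ∑ S ∈ (univ : Finset (Fin n)).powersetCard m, (if S ⊆ N v then 1 else 0) := by
    intro v
    rw [← Finset.card_filter]
    have : ((univ : Finset (Fin n)).powersetCard m).filter (fun S => S ⊆ N v)
        = (N v).powersetCard m := by
      ext S
      simp only [mem_filter, mem_powersetCard, subset_univ, true_and]
      tauto
    simp [this, Finset.card_powersetCard]
  calc ∑ v, ((N v).card.choose m)
      = ∑ v, ∑ S ∈ (univ : Finset (Fin n)).powersetCard m, (if S ⊆ N v then 1 else 0) := by
        simp [key]
    _ = ∑ S ∈ (univ : Finset (Fin n)).powersetCard m, ∑ v, (if S ⊆ N v then 1 else 0) :=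
        Finset.sum_comm
    _ ≤ ∑ S ∈ (univ : Finset (Fin n)).powersetCard m, M := by
        apply Finset.sum_le_sum
        intro S hS
        rw [← Finset.card_filter]
        simpa using h S (Finset.mem_powersetCard.1 hS).2
    _ = M * n.choose m := by
        simp [Finset.card_powersetCard, mul_comm]

lemma aux_no_mono {n s t a b p q P Q i : ℕ} {c : Fin n → Fin n → ℕ}
    (hprop : ∀ A B : Finset (Fin n),
      (A.card = s ∧ B.card = t) ∨ (A.card = t ∧ B.card = s) →
      s * t - a * b + 2 ≤ ((A ×ˢ B).image fun p => c p.1 p.2).card)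
    (hPQ : (P = s ∧ Q = t) ∨ (P = t ∧ Q = s))
    (hpq : p * q = a * b) (hPQst : P * Q = s * t)
    (hpP : p ≤ P) (hqQ : q ≤ Q) (hPn : P ≤ n) (hQn : Q ≤ n)
    {S B : Finset (Fin n)} (hS : S.card = p) (hB : B.card = q)
    (hmono : ∀ u ∈ S, ∀ v ∈ B, c u v = i) : False := by
  obtain ⟨A, hSA, -, hA⟩ := Finset.exists_subsuperset_card_eq (n := P) (Finset.subset_univ S)
    (by omega) (by simpa using hPn)
  obtain ⟨B', hBB', -, hB'⟩ := Finset.exists_subsuperset_card_eq (n := Q) (Finset.subset_univ B)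
    (by omega) (by simpa using hQn)
  have hsub : S ×ˢ B ⊆ A ×ˢ B' := Finset.product_subset_product hSA hBB'
  have hcard : ((A ×ˢ B').image fun p => c p.1 p.2).card ≤ 1 + (s * t - a * b) := by
    have himg : ((A ×ˢ B').image fun p => c p.1 p.2)
        ⊆ insert i (((A ×ˢ B') \ (S ×ˢ B)).image fun p => c p.1 p.2) := by
      intro x hx
      obtain ⟨pr, hpr, rfl⟩ := Finset.mem_image.1 hx
      by_cases hm : pr ∈ S ×ˢ B
      · rw [Finset.mem_product] at hm
        rw [hmono pr.1 hm.1 pr.2 hm.2]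
        exact Finset.mem_insert_self _ _
      · exact Finset.mem_insert_of_mem (Finset.mem_image_of_mem _ (Finset.mem_sdiff.2 ⟨hpr, hm⟩))
    calc ((A ×ˢ B').image fun p => c p.1 p.2).card
        ≤ (insert i (((A ×ˢ B') \ (S ×ˢ B)).image fun p => c p.1 p.2)).card :=
          Finset.card_le_card himg
      _ ≤ 1 + (((A ×ˢ B') \ (S ×ˢ B)).image fun p => c p.1 p.2).card := by
          rw [add_comm]; exact Finset.card_insert_le _ _
      _ ≤ 1 + ((A ×ˢ B') \ (S ×ˢ B)).card := by
          gcongr; exact Finset.card_image_le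
      _ = 1 + (s * t - a * b) := by
          rw [Finset.card_sdiff_of_subset hsub, Finset.card_product, Finset.card_product,
            hA, hB', hS, hB, hpq, hPQst]
  have := hprop A B' (by rcases hPQ with ⟨h1, h2⟩ | ⟨h1, h2⟩ <;> [left; right] <;> omega)
  omega

set_option maxHeartbeats 1000000 in
/-- For `2 ≤ a ≤ s` and `2 ≤ b ≤ t`,
`r(K_{n,n}, K_{s,t}, st - ab + 2) ≥ (1 - o(1)) (n/(max{a,b} - 1))^{1/min{a,b}}`. -/
theorem stmt_16 (s t a b : ℕ) (ha : 2 ≤ a) (has : a ≤ s) (hb : 2 ≤ b) (hbt : b ≤ t) :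
    ∀ ε : ℝ, 0 < ε → ε < 1 → ∃ n₀ : ℕ, ∀ n : ℕ, n₀ ≤ n →
      (1 - ε) * ((n : ℝ) / ((max a b : ℕ) - 1 : ℝ)) ^ ((1 : ℝ) / ((min a b : ℕ) : ℝ)) ≤
        (rBip n s t (s * t - a * b + 2) : ℝ) := by
  intro ε hε hε1
  set m := min a b with hmdef
  set M := max a b with hMdef
  have hm2 : 2 ≤ m := le_min ha hb
  have hM2 : 2 ≤ M := le_trans ha (le_max_left a b)
  have hmM : m * M = a * b := min_mul_max a b
  refine ⟨max (max s t) (⌈(((m : ℝ) - 1) / ε) ^ 2⌉₊ + 1), fun n hn => ?_⟩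
  have hsn : s ≤ n := le_trans (le_trans (le_max_left s t) (le_max_left _ _)) hn
  have htn : t ≤ n := le_trans (le_trans (le_max_right s t) (le_max_left _ _)) hn
  have hn1 : 1 ≤ n := le_trans (le_trans (Nat.le_add_left 1 _) (le_max_right _ _)) hn
  have hnR : (((m : ℝ) - 1) / ε) ^ 2 ≤ (n : ℝ) := by
    have h1 : ⌈(((m : ℝ) - 1) / ε) ^ 2⌉₊ ≤ n := by
      have := le_trans (le_max_right (max s t) _) hn; omega
    exact le_trans (Nat.le_ceil _) (by exact_mod_cast h1)
  -- nonemptiness of the defining set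
  have hmem : (n * n) ∈ {k : ℕ | ∃ c : Fin n → Fin n → ℕ,
      (∀ u v, c u v < k) ∧
      ∀ A B : Finset (Fin n),
        (A.card = s ∧ B.card = t) ∨ (A.card = t ∧ B.card = s) →
        s * t - a * b + 2 ≤ ((A ×ˢ B).image fun p => c p.1 p.2).card} := by
    refine ⟨fun u v => u.val * n + v.val, fun u v => ?_, fun A B hAB => ?_⟩
    · have h1 : u.val + 1 ≤ n := u.isLt
      have h2 : v.val < n := v.isLt
      calc u.val * n + v.val < u.val * n + n := by omega
        _ = (u.val + 1) * n := by ring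
        _ ≤ n * n := Nat.mul_le_mul_right n h1
    · have hc : ((A ×ˢ B).image fun p : Fin n × Fin n => p.1.val * n + p.2.val).card
          = A.card * B.card := by
        rw [← Finset.card_product]
        apply Finset.card_image_of_injOn
        intro p hp q hq hpq
        simp only at hpq
        have h1 : p.2.val < n := p.2.isLt
        have h2 : q.2.val < n := q.2.isLt
        have hv : p.2.val = q.2.val := by
          have e1 : (p.1.val * n + p.2.val) % n = p.2.val := by
            rw [add_comm, Nat.add_mul_mod_self_right, Nat.mod_eq_of_lt h1]
          have e2 : (q.1.val * n + q.2.val) % n = q.2.val := by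
            rw [add_comm, Nat.add_mul_mod_self_right, Nat.mod_eq_of_lt h2]
          rw [← e1, ← e2, hpq]
        have hu : p.1.val = q.1.val := by
          have := hpq; rw [hv] at this
          have := Nat.eq_of_mul_eq_mul_right (show 0 < n by omega)
            (show p.1.val * n = q.1.val * n by omega)
          exact this
        exact Prod.ext (Fin.ext hu) (Fin.ext hv)
      have h4 : 4 ≤ a * b := le_trans (by norm_num) (Nat.mul_le_mul ha hb)
      have hab : a * b ≤ s * t := Nat.mul_le_mul has hbt
      have hts : t * s = s * t := mul_comm t s
      rcases hAB with ⟨h1, h2⟩ | ⟨h1, h2⟩ <;> rw [hc, h1, h2] <;> omega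
  have hkmem : ∃ c : Fin n → Fin n → ℕ,
      (∀ u v, c u v < rBip n s t (s * t - a * b + 2)) ∧
      ∀ A B : Finset (Fin n),
        (A.card = s ∧ B.card = t) ∨ (A.card = t ∧ B.card = s) →
        s * t - a * b + 2 ≤ ((A ×ˢ B).image fun p => c p.1 p.2).card := by
    have h := Nat.sInf_mem (Set.nonempty_of_mem hmem)
    exact h
  obtain ⟨k, hkdef⟩ : ∃ k, rBip n s t (s * t - a * b + 2) = k := ⟨_, rfl⟩
  rw [hkdef] at hkmem ⊢
  obtain ⟨c, hck, hprop⟩ := hkmem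
  have h0n : (0 : ℕ) < n := hn1
  have hk1 : 1 ≤ k := by
    have := hck ⟨0, h0n⟩ ⟨0, h0n⟩; omega
  classical
  -- pigeonhole: a popular color
  have hinner : ∀ v : Fin n, ∑ j ∈ range k, ((univ : Finset (Fin n)).filter
      (fun u => c u v = j)).card = n := by
    intro v
    rw [← Finset.card_eq_sum_card_fiberwise (fun u _ => Finset.mem_range.2 (hck u v))]
    simp
  have hsumF : ∑ j ∈ range k, (∑ v : Fin n,
      ((univ : Finset (Fin n)).filter (fun u => c u v = j)).card) = n * n := by
    calc ∑ j ∈ range k, (∑ v : Fin n,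
        ((univ : Finset (Fin n)).filter (fun u => c u v = j)).card)
        = ∑ v : Fin n, (∑ j ∈ range k,
          ((univ : Finset (Fin n)).filter (fun u => c u v = j)).card) := Finset.sum_comm
      _ = ∑ _v : Fin n, n := Finset.sum_congr rfl fun v _ => hinner v
      _ = n * n := by simp [mul_comm]
  obtain ⟨i, himem, hmax⟩ := Finset.exists_max_image (range k)
    (fun j => ∑ v : Fin n, ((univ : Finset (Fin n)).filter (fun u => c u v = j)).card)
    ⟨0, Finset.mem_range.2 hk1⟩
  set N : Fin n → Finset (Fin n) := fun v => (univ : Finset (Fin n)).filter (fun u => c u v = i)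
    with hNdef
  set e := ∑ v, (N v).card with hedef
  have hee : e = ∑ v, (N v).card := rfl
  have hpig : n * n ≤ k * e := by
    calc n * n = ∑ j ∈ range k, (∑ v : Fin n,
        ((univ : Finset (Fin n)).filter (fun u => c u v = j)).card) := hsumF.symm
      _ ≤ ∑ _j ∈ range k, e := Finset.sum_le_sum fun j hj => hmax j hj
      _ = k * e := by simp [mul_comm]
  -- the key bound on common neighborhoods
  have hbound : ∀ S : Finset (Fin n), S.card = m →
      ((univ : Finset (Fin n)).filter (fun v => S ⊆ N v)).card ≤ M - 1 := by
    intro S hS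
    by_contra hcon
    push_neg at hcon
    have hM' : M ≤ ((univ : Finset (Fin n)).filter (fun v => S ⊆ N v)).card := by omega
    obtain ⟨B', hBsub, hBcard⟩ := Finset.exists_subset_card_eq hM'
    have hmono : ∀ u ∈ S, ∀ v ∈ B', c u v = i := by
      intro u hu v hv
      have h1 := (Finset.mem_filter.1 (hBsub hv)).2 hu
      rw [hNdef] at h1
      exact (Finset.mem_filter.1 h1).2
    rcases le_total a b with hab | hab
    · have hma : m = a := min_eq_left hab
      have hMb : M = b := max_eq_right hab
      exact aux_no_mono hprop (Or.inl ⟨rfl, rfl⟩) (by rw [hma, hMb]) rfl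
        (by omega) (by omega) hsn htn hS hBcard hmono
    · have hma : m = b := min_eq_right hab
      have hMb : M = a := max_eq_left hab
      exact aux_no_mono hprop (Or.inr ⟨rfl, rfl⟩) (by rw [hma, hMb]; ring) (mul_comm t s)
        (by omega) (by omega) htn hsn hS hBcard hmono
  have hcount : ∑ v, ((N v).card.choose m) ≤ (M - 1) * n.choose m := aux_sum_choose N hbound
  -- natural-number chain
  have hNat : ∑ v, ((N v).card - (m - 1)) ^ m ≤ (M - 1) * n ^ m := by
    have hdesc : m.factorial * n.choose m ≤ n ^ m := by
      rw [← Nat.descFactorial_eq_factorial_mul_choose]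
      exact Nat.descFactorial_le_pow n m
    calc ∑ v, ((N v).card - (m - 1)) ^ m
        ≤ ∑ v, m.factorial * ((N v).card.choose m) := Finset.sum_le_sum fun v _ => aux2 _ m
      _ = m.factorial * ∑ v, ((N v).card.choose m) := (Finset.mul_sum _ _ _).symm
      _ ≤ m.factorial * ((M - 1) * n.choose m) := Nat.mul_le_mul_left _ hcount
      _ = (M - 1) * (m.factorial * n.choose m) := by ring
      _ ≤ (M - 1) * n ^ m := Nat.mul_le_mul_left _ hdesc
  have hz : e - n * (m - 1) ≤ ∑ v, ((N v).card - (m - 1)) := by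
    have h1 : e ≤ (∑ v, ((N v).card - (m - 1))) + n * (m - 1) := by
      calc e = ∑ v, (N v).card := hee
        _ ≤ ∑ v, (((N v).card - (m - 1)) + (m - 1)) := Finset.sum_le_sum fun v _ => by omega
        _ = (∑ v, ((N v).card - (m - 1))) + n * (m - 1) := by
            rw [Finset.sum_add_distrib, Finset.sum_const, Finset.card_univ, Fintype.card_fin,
              smul_eq_mul]
    omega
  -- real-analytic endgame
  set z := e - n * (m - 1) with hzdef
  have hm1 : (1:ℕ) ≤ m := by omega
  have hM1 : (1:ℕ) ≤ M := by omega
  have hnn0 : (0:ℝ) < (n:ℝ) := by exact_mod_cast hn1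
  have hnn1 : (1:ℝ) ≤ (n:ℝ) := by exact_mod_cast hn1
  have hmm2 : (2:ℝ) ≤ (m:ℝ) := by exact_mod_cast hm2
  have hmm0 : ((m:ℝ)) ≠ 0 := by linarith
  have hMM1 : (1:ℝ) ≤ (M:ℝ) - 1 := by
    have : (2:ℝ) ≤ (M:ℝ) := by exact_mod_cast hM2
    linarith
  set x : Fin n → ℝ := fun v => (((N v).card - (m - 1) : ℕ) : ℝ) with hxdef
  have hx0 : ∀ v ∈ (univ : Finset (Fin n)), 0 ≤ x v := fun v _ => Nat.cast_nonneg _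
  have hpm := pow_sum_div_card_le_sum_pow (s := (univ : Finset (Fin n))) (f := x)
    hx0 (m - 1)
  rw [show m - 1 + 1 = m by omega] at hpm
  simp only [Finset.card_univ, Fintype.card_fin] at hpm
  have hsum_cast : ∑ v, x v ^ m ≤ ((M - 1 : ℕ):ℝ) * (n:ℝ)^m := by
    calc ∑ v, x v ^ m = ((∑ v, ((N v).card - (m-1))^m : ℕ) : ℝ) := by push_cast; rfl
      _ ≤ (((M-1) * n^m : ℕ):ℝ) := Nat.cast_le.2 hNat
      _ = ((M-1:ℕ):ℝ) * (n:ℝ)^m := by push_cast; ring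
  have hzsum : ((z:ℕ):ℝ) ≤ ∑ v, x v := by
    calc ((z:ℕ):ℝ) ≤ ((∑ v, ((N v).card - (m-1)) : ℕ):ℝ) := Nat.cast_le.2 hz
      _ = ∑ v, x v := by push_cast; rfl
  have hzpow : ((z:ℝ))^m ≤ ((M-1:ℕ):ℝ) * (n:ℝ)^(2*m-1) := by
    have h1 : ((z:ℝ))^m ≤ (∑ v, x v)^m := pow_le_pow_left₀ (Nat.cast_nonneg z) hzsum m
    have h2 : (∑ v, x v)^m ≤ (∑ v, x v ^ m) * (n:ℝ)^(m-1) := by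
      rw [div_le_iff₀ (by positivity)] at hpm; exact hpm
    have h3 : (∑ v, x v^m) * (n:ℝ)^(m-1) ≤ ((M-1:ℕ):ℝ) * (n:ℝ)^m * (n:ℝ)^(m-1) :=
      mul_le_mul_of_nonneg_right hsum_cast (by positivity)
    have h4 : (n:ℝ)^m * (n:ℝ)^(m-1) = (n:ℝ)^(2*m-1) := by
      rw [← pow_add]; congr 1; omega
    exact h1.trans (h2.trans (h3.trans_eq (by rw [mul_assoc, h4])))
  have hM1R : ((M-1:ℕ):ℝ) = (M:ℝ) - 1 := by
    push_cast [Nat.cast_sub hM1]; ring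
  have hz_le : (z:ℝ) ≤ ((M:ℝ) - 1) ^ ((1:ℝ)/(m:ℝ)) * (n:ℝ) ^ (((2*m-1 : ℕ):ℝ)/(m:ℝ)) := by
    have hzr : (z:ℝ) = (((z:ℝ))^(m:ℕ)) ^ ((1:ℝ)/(m:ℝ)) := by
      rw [← Real.rpow_natCast (z:ℝ) m, ← Real.rpow_mul (Nat.cast_nonneg z),
        mul_one_div, div_self hmm0, Real.rpow_one]
    rw [hzr]
    calc (((z:ℝ))^(m:ℕ))^((1:ℝ)/(m:ℝ))
        ≤ (((M:ℝ)-1) * (n:ℝ)^(2*m-1:ℕ)) ^ ((1:ℝ)/(m:ℝ)) := by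
          apply Real.rpow_le_rpow (by positivity) (by rw [← hM1R]; exact hzpow) (by positivity)
      _ = ((M:ℝ)-1)^((1:ℝ)/(m:ℝ)) * ((n:ℝ)^(2*m-1:ℕ))^((1:ℝ)/(m:ℝ)) :=
          Real.mul_rpow (by linarith) (by positivity)
      _ = ((M:ℝ)-1)^((1:ℝ)/(m:ℝ)) * (n:ℝ)^(((2*m-1:ℕ):ℝ)/(m:ℝ)) := by
          rw [← Real.rpow_natCast (n:ℝ) (2*m-1), ← Real.rpow_mul (le_of_lt hnn0), mul_one_div]
  have hfin : (n:ℝ)^2 ≤ (k:ℝ) * ((n:ℝ)*((m:ℝ)-1)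
      + ((M:ℝ)-1)^((1:ℝ)/(m:ℝ)) * (n:ℝ)^(((2*m-1:ℕ):ℝ)/(m:ℝ))) := by
    have he_le : (e:ℝ) ≤ (n:ℝ)*((m:ℝ)-1) + (z:ℝ) := by
      have h5 : e ≤ n * (m-1) + z := by omega
      calc (e:ℝ) ≤ ((n*(m-1) + z : ℕ):ℝ) := Nat.cast_le.2 h5
        _ = (n:ℝ)*((m:ℝ)-1) + (z:ℝ) := by push_cast [Nat.cast_sub hm1]; ring
    have hke : ((n:ℝ))^2 ≤ (k:ℝ) * (e:ℝ) := by
      calc (n:ℝ)^2 = ((n*n:ℕ):ℝ) := by push_cast; ring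
        _ ≤ ((k * e : ℕ):ℝ) := Nat.cast_le.2 hpig
        _ = (k:ℝ)*(e:ℝ) := by push_cast; ring
    calc (n:ℝ)^2 ≤ (k:ℝ)*(e:ℝ) := hke
      _ ≤ (k:ℝ) * ((n:ℝ)*((m:ℝ)-1)
          + ((M:ℝ)-1)^((1:ℝ)/(m:ℝ)) * (n:ℝ)^(((2*m-1:ℕ):ℝ)/(m:ℝ))) := by
          apply mul_le_mul_of_nonneg_left _ (Nat.cast_nonneg k)
          exact le_trans he_le (by linarith [hz_le])
  set u := (n:ℝ)^((1:ℝ)/(m:ℝ)) with hudef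
  set w := ((M:ℝ)-1)^((1:ℝ)/(m:ℝ)) with hwdef
  set Qr := (n:ℝ)^(((2*m-1:ℕ):ℝ)/(m:ℝ)) with hQdef
  have hw1 : 1 ≤ w := Real.one_le_rpow hMM1 (by positivity)
  have hw0 : (0:ℝ) < w := lt_of_lt_of_le one_pos hw1
  have hu0 : (0:ℝ) ≤ u := Real.rpow_nonneg (le_of_lt hnn0) _
  have hQ0 : (0:ℝ) < Qr := Real.rpow_pos_of_pos hnn0 _
  have hdiv : ((n:ℝ)/((M:ℝ)-1))^((1:ℝ)/(m:ℝ)) = u / w :=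
    Real.div_rpow (le_of_lt hnn0) (by linarith : (0:ℝ) ≤ (M:ℝ)-1) _
  have huQ : u * Qr = (n:ℝ)^2 := by
    rw [hudef, hQdef, ← Real.rpow_add hnn0]
    have hexp : (1:ℝ)/(m:ℝ) + ((2*m-1:ℕ):ℝ)/(m:ℝ) = 2 := by
      have hcast : ((2*m-1:ℕ):ℝ) = 2*(m:ℝ) - 1 := by
        push_cast [Nat.cast_sub (show 1 ≤ 2*m by omega)]; ring
      rw [hcast]; field_simp; ring
    rw [hexp, show (2:ℝ) = ((2:ℕ):ℝ) by norm_num, Real.rpow_natCast]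
  have hu_half : u ≤ (n:ℝ)^((1:ℝ)/2) :=
    Real.rpow_le_rpow_of_exponent_le hnn1 (one_div_le_one_div_of_le two_pos hmm2)
  have hhalf : (n:ℝ)^((1:ℝ)/2) * (n:ℝ)^((1:ℝ)/2) = (n:ℝ) := by
    rw [← Real.rpow_add hnn0]; norm_num
  have hm1eps : ((m:ℝ)-1) ≤ ε * (n:ℝ)^((1:ℝ)/2) := by
    have h0 : 0 ≤ ((m:ℝ)-1)/ε := div_nonneg (by linarith) (le_of_lt hε)
    have h1 : ((m:ℝ)-1)/ε ≤ Real.sqrt (n:ℝ) := by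
      have h2 := Real.sqrt_le_sqrt hnR
      rwa [Real.sqrt_sq h0] at h2
    rw [Real.sqrt_eq_rpow] at h1
    calc ((m:ℝ)-1) = (((m:ℝ)-1)/ε) * ε := by field_simp
      _ ≤ (n:ℝ)^((1:ℝ)/2) * ε := mul_le_mul_of_nonneg_right h1 (le_of_lt hε)
      _ = ε * (n:ℝ)^((1:ℝ)/2) := mul_comm _ _
  set P := (n:ℝ)*((m:ℝ)-1) + w * Qr with hPdef
  have hP0 : (0:ℝ) < P := by
    have hnn : (0:ℝ) ≤ (n:ℝ)*((m:ℝ)-1) := mul_nonneg (le_of_lt hnn0) (by linarith)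
    have := mul_pos hw0 hQ0
    rw [hPdef]; linarith
  have hkey : (1-ε) * (u/w) * P ≤ (n:ℝ)^2 := by
    have hA0 : (0:ℝ) ≤ (u/w) * ((n:ℝ)*((m:ℝ)-1)) :=
      mul_nonneg (div_nonneg hu0 (le_of_lt hw0)) (mul_nonneg (le_of_lt hnn0) (by linarith))
    have hA : (u/w) * ((n:ℝ)*((m:ℝ)-1)) ≤ ε * (n:ℝ)^2 := by
      have h1 : u/w ≤ u := div_le_self hu0 hw1
      have h2 : u * ((m:ℝ)-1) ≤ ε * (n:ℝ) := by
        calc u * ((m:ℝ)-1) ≤ (n:ℝ)^((1:ℝ)/2) * (ε * (n:ℝ)^((1:ℝ)/2)) := by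
              apply mul_le_mul hu_half hm1eps (by linarith) (by positivity)
          _ = ε * ((n:ℝ)^((1:ℝ)/2) * (n:ℝ)^((1:ℝ)/2)) := by ring
          _ = ε * (n:ℝ) := by rw [hhalf]
      calc (u/w) * ((n:ℝ)*((m:ℝ)-1)) ≤ u * ((n:ℝ)*((m:ℝ)-1)) :=
            mul_le_mul_of_nonneg_right h1 (mul_nonneg (le_of_lt hnn0) (by linarith))
        _ = (u * ((m:ℝ)-1)) * (n:ℝ) := by ring
        _ ≤ (ε * (n:ℝ)) * (n:ℝ) := mul_le_mul_of_nonneg_right h2 (le_of_lt hnn0)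
        _ = ε * (n:ℝ)^2 := by ring
    have hB : (u/w) * (w * Qr) = (n:ℝ)^2 := by
      have h3 : (u/w) * (w * Qr) = u * Qr := by field_simp
      rw [h3, huQ]
    have expand : (u/w) * P = (u/w)*((n:ℝ)*((m:ℝ)-1)) + (n:ℝ)^2 := by
      rw [hPdef, mul_add, hB]
    nlinarith [mul_nonneg (le_of_lt hε) hA0]
  have hfinal : (1-ε)*(u/w) ≤ (k:ℝ) := by
    apply le_of_mul_le_mul_right _ hP0
    calc (1-ε)*(u/w)*P ≤ (n:ℝ)^2 := hkey
      _ ≤ (k:ℝ)*P := hfin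
  rw [hdiv]
  exact hfinal
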